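/- arXiv:1904.03322 — 5 statements merged into one kernel-verified Lean document; each statement's English description precedes it below -/
import Mathlib

section
/- In the 5-agent, 7-good instance with desired sets R_1 = {1,2,7}, R_2 = {3,4,7}, R_3 = {5,6,7}, R'_4 = {1,3,5,7}, R_5 = {2,4,6}, supplies s_7 = 2 and s_j = 1 for j ≠ 7 (utility profile u'): for every ρ ∈ (-∞, 1] (with ρ = 0 interpreted as Nash welfare), every allocation x' ∈ Ψ_ρ(u') satisfies u'_i(x'_i) = 1/2 for all agents i; in particular, min_{j ∈ {1,3,5}} x'_{4j} ≥ 1/2. -/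
open scoped Classical
open Real

namespace BandwidthAlloc

/-- A bid: `none` denotes the special bid β; `some r` denotes the real bid `r ≥ 0`. -/
abbrev Bid := Option NNReal

/-- Numeric value of a bid (β is treated as 0 in arithmetic). -/
noncomputable def bval (b : Bid) : ℝ := ((b.getD 0 : NNReal) : ℝ)

/-- A bid is positive when it is neither 0 nor β. -/
def posBid (b : Bid) : Prop := 0 < bval b

/-- Utility of the bundle `xi` for an agent with desired set `Ri`: `min_{j ∈ Ri} xi j`. -/
noncomputable def bundleUtil {m : ℕ} (Ri : Finset (Fin m)) (xi : Fin m → ℝ) : ℝ :=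
  sInf (xi '' (Ri : Set (Fin m)))

/-- Bandwidth-allocation utility of agent `i` under allocation `x`. -/
noncomputable def util {n m : ℕ} (R : Fin n → Finset (Fin m))
    (x : Fin n → Fin m → ℝ) (i : Fin n) : ℝ :=
  bundleUtil (R i) (x i)

/-- Weights: `w R i j = 1` iff `j ∈ R i`, else `0`. -/
noncomputable def w {n m : ℕ} (R : Fin n → Finset (Fin m)) (i : Fin n) (j : Fin m) : ℝ :=
  if j ∈ R i then 1 else 0

/-- A valid (nonnegative, supply-respecting) allocation. -/
def validAlloc {n m : ℕ} (s : Fin m → ℝ) (x : Fin n → Fin m → ℝ) : Prop :=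
  (∀ i j, 0 ≤ x i j) ∧ ∀ j, ∑ i, x i j ≤ s j

/-- CES welfare of the utility vector `v` (`ρ = 0` is Nash welfare; for `ρ < 0` a zero
utility yields welfare `0`, the limiting convention). -/
noncomputable def ces (ρ : ℝ) {n : ℕ} (v : Fin n → ℝ) : ℝ :=
  if ρ = 0 then ∏ i, v i
  else if ρ < 0 ∧ ∃ i, v i = 0 then 0
  else (∑ i, v i ^ ρ) ^ (1 / ρ)

/-- `Ψ_ρ`: `x` is a valid allocation maximizing CES welfare among valid allocations. -/
def maxCES (ρ : ℝ) {n m : ℕ} (s : Fin m → ℝ) (R : Fin n → Finset (Fin m))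
    (x : Fin n → Fin m → ℝ) : Prop :=
  validAlloc s x ∧ ∀ y, validAlloc s y → ces ρ (util R y) ≤ ces ρ (util R x)

/-- Constraint curve: continuous, normalized, strictly increasing, nonnegative on `[0,∞)`. -/
def IsConstraintCurve (f : ℝ → ℝ) : Prop :=
  ContinuousOn f (Set.Ici 0) ∧ f 0 = 0 ∧ StrictMonoOn f (Set.Ici 0) ∧
    ∀ y ∈ Set.Ici (0 : ℝ), 0 ≤ f y

/-- `g` is identically zero on `[0,∞)`. -/
def zeroOn (g : ℝ → ℝ) : Prop := ∀ y ∈ Set.Ici (0 : ℝ), g y = 0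

/-- Price curve: continuous, normalized, nonnegative, and either strictly increasing or
identically zero on `[0,∞)`. -/
def IsPriceCurve (g : ℝ → ℝ) : Prop :=
  ContinuousOn g (Set.Ici 0) ∧ g 0 = 0 ∧ (∀ y ∈ Set.Ici (0 : ℝ), 0 ≤ g y) ∧
    (StrictMonoOn g (Set.Ici 0) ∨ zeroOn g)

/-- Cost of the bundle `xi` under price curves `g`. -/
noncomputable def cost {m : ℕ} (g : Fin m → ℝ → ℝ) (xi : Fin m → ℝ) : ℝ :=
  ∑ j, g j (xi j)

/-- `xi` is in the demand set of an agent with desired set `Ri` under price curves `g`. -/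
def inDemand {m : ℕ} (g : Fin m → ℝ → ℝ) (Ri : Finset (Fin m)) (xi : Fin m → ℝ) : Prop :=
  (∀ j, 0 ≤ xi j) ∧ cost g xi ≤ 1 ∧
    ∀ yi : Fin m → ℝ, (∀ j, 0 ≤ yi j) → cost g yi ≤ 1 → bundleUtil Ri yi ≤ bundleUtil Ri xi

/-- Price curve equilibrium. -/
def isPCE {n m : ℕ} (s : Fin m → ℝ) (R : Fin n → Finset (Fin m))
    (x : Fin n → Fin m → ℝ) (g : Fin m → ℝ → ℝ) : Prop :=
  (∀ i, inDemand g (R i) (x i)) ∧ (∀ j, ∑ i, x i j ≤ s j) ∧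
    ∀ j, ¬ zeroOn (g j) → ∑ i, x i j = s j

/-- Step 1 of the ATP allocation rule: proportional sharing. -/
noncomputable def atp1 {n m : ℕ} (s : Fin m → ℝ) (b : Fin n → Fin m → Bid)
    (i : Fin n) (j : Fin m) : ℝ :=
  bval (b i j) / (∑ k, bval (b k j)) * s j

/-- Steps 1–2 of the ATP allocation rule: goods with a positive bid are shared
proportionally; on a good where everyone bids `0` or `β`, an agent bidding `β` receives
as much as she receives of some fixed good on which she bids positively. -/
noncomputable def atp2 {n m : ℕ} (s : Fin m → ℝ) (b : Fin n → Fin m → Bid)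
    (i : Fin n) (j : Fin m) : ℝ :=
  if ∃ k, posBid (b k j) then atp1 s b i j
  else if b i j = none then
    (if h : ∃ ℓ, posBid (b i ℓ) then atp1 s b i (Classical.choose h) else 0)
  else 0

/-- The full ATP allocation rule (steps 1–3): agents bidding `β` on an oversubscribed
step-2 good are penalized with the zero bundle. -/
noncomputable def atp {n m : ℕ} (s : Fin m → ℝ) (b : Fin n → Fin m → Bid)
    (i : Fin n) (j : Fin m) : ℝ :=
  if ∃ ℓ, (¬ ∃ k, posBid (b k ℓ)) ∧ b i ℓ = none ∧ s ℓ < ∑ k, atp2 s b k ℓ then 0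
  else atp2 s b i j

/-- Total bid-constraint cost `C_f(b_i)` of agent `i`'s bid vector. -/
noncomputable def bidCost {m : ℕ} (f : Fin m → ℝ → ℝ) (bi : Fin m → Bid) : ℝ :=
  ∑ j, f j (bval (bi j))

/-- A bid vector is feasible if it obeys the bid constraint `C_f(b_i) ≤ 1`. -/
def feasibleBid {m : ℕ} (f : Fin m → ℝ → ℝ) (bi : Fin m → Bid) : Prop :=
  bidCost f bi ≤ 1

/-- `b` is a Nash equilibrium of `ATP(f)`: all bids are feasible and no agent can
strictly increase her utility by a unilateral feasible deviation. -/
def isNE {n m : ℕ} (s : Fin m → ℝ) (f : Fin m → ℝ → ℝ)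
    (R : Fin n → Finset (Fin m)) (b : Fin n → Fin m → Bid) : Prop :=
  (∀ i, feasibleBid f (b i)) ∧
    ∀ (i : Fin n) (bi' : Fin m → Bid), feasibleBid f bi' →
      util R (atp s (Function.update b i bi')) i ≤ util R (atp s b) i

/-- `NE_X(ATP(f))`: allocations arising from Nash equilibrium bid profiles. -/
def NEX {n m : ℕ} (s : Fin m → ℝ) (f : Fin m → ℝ → ℝ)
    (R : Fin n → Finset (Fin m)) : Set (Fin n → Fin m → ℝ) :=
  {x | ∃ b, isNE s f R b ∧ x = atp s b}

/-- `f` is homogeneous of degree `α` on the nonnegative reals. -/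
def Homog (f : ℝ → ℝ) (α : ℝ) : Prop :=
  ∀ c ≥ (0 : ℝ), ∀ y ≥ (0 : ℝ), f (c * y) = c ^ α * f y

/-- `γ* = max {γ ≥ 0 : γ · Σ_i w_{ij} ≤ s_j for all j}` of Mechanism 1. -/
noncomputable def gammaStar {n m : ℕ} (s : Fin m → ℝ) (R : Fin n → Finset (Fin m)) : ℝ :=
  sSup {γ : ℝ | 0 ≤ γ ∧ ∀ j, γ * ∑ i, w R i j ≤ s j}

/-- Mechanism 1: `x i j = γ* · w i j`. -/
noncomputable def mech1 {n m : ℕ} (s : Fin m → ℝ) (R : Fin n → Finset (Fin m)) :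
    Fin n → Fin m → ℝ :=
  fun i j => gammaStar s R * w R i j

/-- `min_i u_i(x_i)`. -/
noncomputable def minUtil {n m : ℕ} (R : Fin n → Finset (Fin m))
    (x : Fin n → Fin m → ℝ) : ℝ :=
  sInf (Set.range fun i => util R x i)

/-- `x` is maxmin-optimal: valid and attaining the maximum of `min_i u_i` over valid
allocations. -/
def maxminOptimal {n m : ℕ} (s : Fin m → ℝ) (R : Fin n → Finset (Fin m))
    (x : Fin n → Fin m → ℝ) : Prop :=
  validAlloc s x ∧ ∀ y, validAlloc s y → minUtil R y ≤ minUtil R x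

/-- Mechanism 2: `P i k` is the set agent `i` claims agent `k` desires.
`eta P i = |{k : R_k(k) ≠ R_k(i)}|`. -/
noncomputable def eta {n m : ℕ} (P : Fin n → Fin n → Finset (Fin m)) (i : Fin n) : ℕ :=
  (Finset.univ.filter fun k => P k k ≠ P i k).card

/-- Agent `i` is in `N̄`: for some `k`, `R_k(k) ⊊ R_k(i)`. -/
def inNbar {n m : ℕ} (P : Fin n → Fin n → Finset (Fin m)) (i : Fin n) : Prop :=
  ∃ k, P k k ⊂ P i k

/-- The penalty factor `α_i` of Mechanism 2. -/
noncomputable def alpha {n m : ℕ} (P : Fin n → Fin n → Finset (Fin m)) (i : Fin n) : ℝ :=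
  if inNbar P i then 0 else 1 - (eta P i : ℝ) / n

/-- Effective reported sets of Mechanism 2: agents in `N̄` are replaced by `∅`. -/
noncomputable def effSets {n m : ℕ} (P : Fin n → Fin n → Finset (Fin m)) :
    Fin n → Finset (Fin m) :=
  fun i => if inNbar P i then ∅ else P i i

/-- Mechanism 2: the allocation `x_i = α_i · y_i` where `y` is the Mechanism 1 outcome
on the effective sets. -/
noncomputable def mech2 {n m : ℕ} (s : Fin m → ℝ) (P : Fin n → Fin n → Finset (Fin m)) :
    Fin n → Fin m → ℝ :=
  fun i j => alpha P i * mech1 s (effSets P) i j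


/-! ### Auxiliary lemmas for `lie_ge_half` -/

lemma bundleUtil_le' {m : ℕ} {Ri : Finset (Fin m)} (xi : Fin m → ℝ) {j : Fin m}
    (hj : j ∈ Ri) : bundleUtil Ri xi ≤ xi j :=
  csInf_le ((Ri.finite_toSet.image xi).bddBelow) ⟨j, hj, rfl⟩

lemma bundleUtil_ge' {m : ℕ} {Ri : Finset (Fin m)} (xi : Fin m → ℝ) {c : ℝ}
    (hR : Ri.Nonempty) (h : ∀ j ∈ Ri, c ≤ xi j) : c ≤ bundleUtil Ri xi := by
  apply le_csInf
  · obtain ⟨j, hj⟩ := hR; exact ⟨xi j, j, hj, rfl⟩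
  · rintro b ⟨j, hj, rfl⟩; exact h j hj

lemma bundleUtil_eq' {m : ℕ} {Ri : Finset (Fin m)} (xi : Fin m → ℝ) {c : ℝ}
    {j : Fin m} (hj : j ∈ Ri) (hc : xi j = c) (h : ∀ k ∈ Ri, c ≤ xi k) :
    bundleUtil Ri xi = c :=
  le_antisymm (hc ▸ bundleUtil_le' xi hj) (bundleUtil_ge' xi ⟨j, hj⟩ h)

lemma bundleUtil_mono' {m : ℕ} {S T : Finset (Fin m)} (xi : Fin m → ℝ)
    (hS : S.Nonempty) (hST : S ⊆ T) : bundleUtil T xi ≤ bundleUtil S xi := by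
  apply csInf_le_csInf ((T.finite_toSet.image xi).bddBelow)
  · obtain ⟨j, hj⟩ := hS; exact ⟨xi j, j, hj, rfl⟩
  · exact Set.image_mono (f := xi) (by exact_mod_cast hST)

/-- `F ρ c` is the CES welfare of the constant-`c` utility vector (5 agents). -/
noncomputable def F (ρ c : ℝ) : ℝ := if ρ = 0 then c ^ 5 else 5 ^ (1/ρ) * c

lemma F_mono (ρ : ℝ) {c d : ℝ} (hc : 0 ≤ c) (hcd : c < d) : F ρ c < F ρ d := by
  unfold F
  split_ifs with h
  · exact pow_lt_pow_left₀ hcd hc (by norm_num)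
  · have h5 : (0:ℝ) < 5 ^ (1/ρ) := rpow_pos_of_pos (by norm_num) _
    nlinarith

lemma ces_const (ρ : ℝ) {c : ℝ} (hc : 0 < c) : ces ρ (fun _ : Fin 5 => c) = F ρ c := by
  unfold ces F
  split_ifs with h h2
  · simp [Fin.prod_univ_five]
  · exact absurd h2.2 (by simp [hc.ne'])
  · have h5 : ∑ _i : Fin 5, c ^ ρ = 5 * c ^ ρ := by
      simp [Fin.sum_univ_five]
    rw [h5, mul_rpow (by norm_num) (rpow_nonneg hc.le _), ← rpow_mul hc.le,
      mul_one_div_cancel h, rpow_one]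

lemma ces_le_F (ρ : ℝ) (hρ : ρ ≤ 1) (v : Fin 5 → ℝ) (hv : ∀ i, 0 ≤ v i) :
    ces ρ v ≤ F ρ ((∑ i, v i) / 5) := by
  have hSnn : 0 ≤ ∑ i, v i := Finset.sum_nonneg fun i _ => hv i
  have hS : 0 ≤ (∑ i, v i) / 5 := by linarith
  have hw : ∀ i ∈ Finset.univ, (0:ℝ) ≤ (fun _ : Fin 5 => (5:ℝ)⁻¹) i := by intro i _; norm_num
  have hw' : ∑ _i : Fin 5, (5:ℝ)⁻¹ = 1 := by
    rw [Fin.sum_univ_five]; norm_num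
  have amgm : ∏ i, (v i) ^ ((5:ℝ)⁻¹) ≤ (∑ i, v i) / 5 := by
    calc ∏ i, (v i) ^ ((5:ℝ)⁻¹) ≤ ∑ i : Fin 5, (5:ℝ)⁻¹ * v i :=
        Real.geom_mean_le_arith_mean_weighted Finset.univ _ v hw hw' (fun i _ => hv i)
      _ = (∑ i, v i) / 5 := by rw [← Finset.mul_sum]; ring
  have hGnn : 0 ≤ ∏ i, (v i) ^ ((5:ℝ)⁻¹) :=
    Finset.prod_nonneg fun i _ => rpow_nonneg (hv i) _
  unfold ces F
  rcases eq_or_ne ρ 0 with h0 | h0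
  · simp only [h0, if_pos rfl]
    have key : ∏ i, v i = (∏ i, (v i) ^ ((5:ℝ)⁻¹)) ^ (5:ℕ) := by
      rw [← Finset.prod_pow]
      refine Finset.prod_congr rfl fun i _ => ?_
      rw [← rpow_natCast ((v i) ^ ((5:ℝ)⁻¹)) 5, ← rpow_mul (hv i)]
      norm_num
    rw [key]
    exact pow_le_pow_left₀ hGnn amgm 5
  · rw [if_neg h0, if_neg h0]
    rcases lt_or_gt_of_ne h0 with hneg | hpos
    · by_cases hz : ∃ i, v i = 0
      · rw [if_pos ⟨hneg, hz⟩]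
        positivity
      · rw [if_neg (by tauto)]
        push_neg at hz
        have hvpos : ∀ i, 0 < v i := fun i => (hv i).lt_of_ne' (hz i)
        set G := ∏ i, (v i) ^ ((5:ℝ)⁻¹) with hG
        have hGpos : 0 < G := Finset.prod_pos fun i _ => rpow_pos_of_pos (hvpos i) _
        have amgm2 : 5 * G ^ ρ ≤ ∑ i, v i ^ ρ := by
          have h1 : ∏ i, ((v i) ^ ρ) ^ ((5:ℝ)⁻¹) ≤ ∑ i : Fin 5, (5:ℝ)⁻¹ * (v i) ^ ρ :=
            Real.geom_mean_le_arith_mean_weighted Finset.univ _ _ hw hw'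
              (fun i _ => rpow_nonneg (hv i) _)
          have h2 : ∏ i, ((v i) ^ ρ) ^ ((5:ℝ)⁻¹) = G ^ ρ := by
            rw [hG, ← Real.finset_prod_rpow Finset.univ (fun i => v i ^ ((5:ℝ)⁻¹))
              (fun i _ => rpow_nonneg (hv i) _) ρ]
            refine Finset.prod_congr rfl fun i _ => ?_
            rw [← rpow_mul (hv i), ← rpow_mul (hv i), mul_comm]
          rw [h2] at h1
          rw [← Finset.mul_sum] at h1
          linarith
        have hGρ : 0 < 5 * G ^ ρ := by positivity
        have step : (∑ i, v i ^ ρ) ^ (1/ρ) ≤ (5 * G ^ ρ) ^ (1/ρ) :=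
          rpow_le_rpow_of_nonpos hGρ amgm2 (by
            apply div_nonpos_of_nonneg_of_nonpos <;> linarith)
        have eq1 : (5 * G ^ ρ) ^ (1/ρ) = 5 ^ (1/ρ) * G := by
          rw [mul_rpow (by norm_num) (rpow_nonneg hGpos.le _), ← rpow_mul hGpos.le,
            mul_one_div_cancel h0, rpow_one]
        have h5 : (0:ℝ) < 5 ^ (1/ρ) := rpow_pos_of_pos (by norm_num) _
        calc (∑ i, v i ^ ρ) ^ (1/ρ) ≤ 5 ^ (1/ρ) * G := by rw [← eq1]; exact step
          _ ≤ 5 ^ (1/ρ) * ((∑ i, v i) / 5) := by nlinarith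
    · rw [if_neg (by rintro ⟨h, -⟩; linarith)]
      have hp : 1 ≤ 1/ρ := by
        rw [le_div_iff₀ hpos]; linarith
      have key := Real.rpow_arith_mean_le_arith_mean_rpow Finset.univ
        (fun _ : Fin 5 => (5:ℝ)⁻¹) (fun i => v i ^ ρ) hw hw'
        (fun i _ => rpow_nonneg (hv i) _) hp
      have hrhs : ∑ i : Fin 5, (5:ℝ)⁻¹ * (v i ^ ρ) ^ (1/ρ) = (∑ i, v i) / 5 := by
        have : ∀ i : Fin 5, (v i ^ ρ) ^ (1/ρ) = v i := fun i => by
          rw [← rpow_mul (hv i), mul_one_div_cancel h0, rpow_one]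
        simp only [this]
        rw [← Finset.mul_sum]; ring
      have hlhs : (∑ i : Fin 5, (5:ℝ)⁻¹ * v i ^ ρ) ^ (1/ρ)
          = (5:ℝ)⁻¹ ^ (1/ρ) * (∑ i, v i ^ ρ) ^ (1/ρ) := by
        rw [← Finset.mul_sum, mul_rpow (by norm_num)
          (Finset.sum_nonneg fun i _ => rpow_nonneg (hv i) _)]
      rw [hrhs, hlhs] at key
      have h5 : (0:ℝ) < 5 ^ (1/ρ) := rpow_pos_of_pos (by norm_num) _
      have hinv : (5:ℝ)⁻¹ ^ (1/ρ) = (5 ^ (1/ρ))⁻¹ := inv_rpow (by norm_num) _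
      rw [hinv] at key
      calc (∑ i, v i ^ ρ) ^ (1/ρ)
          = 5 ^ (1/ρ) * ((5 ^ (1/ρ))⁻¹ * (∑ i, v i ^ ρ) ^ (1/ρ)) := by
            field_simp
        _ ≤ 5 ^ (1/ρ) * ((∑ i, v i) / 5) := by
            apply mul_le_mul_of_nonneg_left key h5.le

/-- The desired sets of the `lie` instance. -/
noncomputable def Rlie : Fin 5 → Finset (Fin 7) :=
  ![{0, 1, 6}, {2, 3, 6}, {4, 5, 6}, {0, 2, 4, 6}, {1, 3, 5}]

/-- The all-halves allocation in the `lie` instance. -/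
noncomputable def xhalf : Fin 5 → Fin 7 → ℝ := fun i j => if j ∈ Rlie i then 1/2 else 0

lemma Rlie_nonempty (i : Fin 5) : (Rlie i).Nonempty := by
  fin_cases i <;> exact ⟨_, Finset.mem_insert_self _ _⟩

lemma xhalf_valid :
    validAlloc (fun j : Fin 7 => if j = (6 : Fin 7) then (2:ℝ) else 1) xhalf := by
  constructor
  · intro i j; unfold xhalf; split_ifs <;> norm_num
  · intro j
    fin_cases j <;>
      simp [Fin.sum_univ_five, xhalf, Rlie, Finset.mem_insert, Finset.mem_singleton] <;>
      norm_num

lemma xhalf_util (i : Fin 5) : util Rlie xhalf i = 1/2 := by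
  obtain ⟨j, hj⟩ := Rlie_nonempty i
  exact bundleUtil_eq' _ hj (if_pos hj) (fun k hk => (if_pos hk).ge)

/-- Lemma lie: in the instance where agent 4 (index 3) reports
`R'_4 = {1,3,5,7}` (indices {0,2,4,6}), for every `ρ ≤ 1`, every CES-welfare-maximizing
allocation gives every agent reported utility exactly 1/2; in particular agent 4's true
utility `min_{j ∈ {0,2,4}} x_{4j}` is at least 1/2. -/
theorem lie_ge_half (ρ : ℝ) (hρ : ρ ≤ 1) (x : Fin 5 → Fin 7 → ℝ)
    (hx : maxCES ρ (fun j => if j = (6 : Fin 7) then 2 else 1)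
      (![{0, 1, 6}, {2, 3, 6}, {4, 5, 6}, {0, 2, 4, 6}, {1, 3, 5}] :
        Fin 5 → Finset (Fin 7)) x) :
    (∀ i, util (![{0, 1, 6}, {2, 3, 6}, {4, 5, 6}, {0, 2, 4, 6}, {1, 3, 5}] :
        Fin 5 → Finset (Fin 7)) x i = 1 / 2) ∧
      1 / 2 ≤ bundleUtil ({0, 2, 4} : Finset (Fin 7)) (x 3) := by
  have hx' : maxCES ρ (fun j => if j = (6 : Fin 7) then 2 else 1) Rlie x := hx
  have hnn := hx'.1.1
  have hle : ∀ (i : Fin 5) (j : Fin 7), j ∈ Rlie i → util Rlie x i ≤ x i j :=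
    fun i j h => bundleUtil_le' _ h
  have hun : ∀ i, 0 ≤ util Rlie x i :=
    fun i => bundleUtil_ge' (x i) (Rlie_nonempty i) (fun j _ => hnn i j)
  set u := util Rlie x with hu
  have hg := hx'.1.2
  have hg0 : x 0 0 + x 1 0 + x 2 0 + x 3 0 + x 4 0 ≤ 1 := by
    rw [← Fin.sum_univ_five (fun i => x i 0)]; simpa using hg 0
  have hg1 : x 0 1 + x 1 1 + x 2 1 + x 3 1 + x 4 1 ≤ 1 := by
    rw [← Fin.sum_univ_five (fun i => x i 1)]; simpa using hg 1
  have hg2 : x 0 2 + x 1 2 + x 2 2 + x 3 2 + x 4 2 ≤ 1 := by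
    rw [← Fin.sum_univ_five (fun i => x i 2)]; simpa using hg 2
  have hg3 : x 0 3 + x 1 3 + x 2 3 + x 3 3 + x 4 3 ≤ 1 := by
    rw [← Fin.sum_univ_five (fun i => x i 3)]; simpa using hg 3
  have hg4 : x 0 4 + x 1 4 + x 2 4 + x 3 4 + x 4 4 ≤ 1 := by
    rw [← Fin.sum_univ_five (fun i => x i 4)]; simpa using hg 4
  have hg5 : x 0 5 + x 1 5 + x 2 5 + x 3 5 + x 4 5 ≤ 1 := by
    rw [← Fin.sum_univ_five (fun i => x i 5)]; simpa using hg 5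
  have hg6 : x 0 6 + x 1 6 + x 2 6 + x 3 6 + x 4 6 ≤ 2 := by
    rw [← Fin.sum_univ_five (fun i => x i 6)]; simpa using hg 6
  have c1 : u 0 + u 3 ≤ 1 := by
    have h1 := hle 0 0 (by decide); have h2 := hle 3 0 (by decide)
    have := hnn 1 0; have := hnn 2 0; have := hnn 4 0; linarith
  have c2 : u 0 + u 4 ≤ 1 := by
    have h1 := hle 0 1 (by decide); have h2 := hle 4 1 (by decide)
    have := hnn 1 1; have := hnn 2 1; have := hnn 3 1; linarith
  have c3 : u 1 + u 3 ≤ 1 := by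
    have h1 := hle 1 2 (by decide); have h2 := hle 3 2 (by decide)
    have := hnn 0 2; have := hnn 2 2; have := hnn 4 2; linarith
  have c4 : u 1 + u 4 ≤ 1 := by
    have h1 := hle 1 3 (by decide); have h2 := hle 4 3 (by decide)
    have := hnn 0 3; have := hnn 2 3; have := hnn 3 3; linarith
  have c5 : u 2 + u 3 ≤ 1 := by
    have h1 := hle 2 4 (by decide); have h2 := hle 3 4 (by decide)
    have := hnn 0 4; have := hnn 1 4; have := hnn 4 4; linarith
  have c6 : u 2 + u 4 ≤ 1 := by
    have h1 := hle 2 5 (by decide); have h2 := hle 4 5 (by decide)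
    have := hnn 0 5; have := hnn 1 5; have := hnn 3 5; linarith
  have c7 : u 0 + u 1 + u 2 + u 3 ≤ 2 := by
    have h1 := hle 0 6 (by decide); have h2 := hle 1 6 (by decide)
    have h3 := hle 2 6 (by decide); have h4 := hle 3 6 (by decide)
    have := hnn 4 6; linarith
  have hopt := hx'.2 xhalf xhalf_valid
  have hhalf : util Rlie xhalf = fun _ : Fin 5 => (1/2:ℝ) := funext xhalf_util
  rw [hhalf, ces_const ρ (by norm_num : (0:ℝ) < 1/2)] at hopt
  have hub := ces_le_F ρ hρ u hun
  have hSle : ∑ i, u i ≤ 5/2 := by rw [Fin.sum_univ_five]; linarith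
  have hSnn : 0 ≤ ∑ i, u i := Finset.sum_nonneg fun i _ => hun i
  have hSge : (5:ℝ)/2 ≤ ∑ i, u i := by
    by_contra h
    push_neg at h
    have hlt : F ρ ((∑ i, u i) / 5) < F ρ (1/2) :=
      F_mono ρ (by linarith) (by linarith)
    linarith
  have hS : u 0 + u 1 + u 2 + u 3 + u 4 = 5/2 := by
    rw [← Fin.sum_univ_five u]; linarith
  have e0 : u 0 = 1/2 := by linarith
  have e1 : u 1 = 1/2 := by linarith
  have e2 : u 2 = 1/2 := by linarith
  have e3 : u 3 = 1/2 := by linarith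
  have e4 : u 4 = 1/2 := by linarith
  constructor
  · intro i
    fin_cases i
    · exact e0
    · exact e1
    · exact e2
    · exact e3
    · exact e4
  · have hmono : bundleUtil (Rlie 3) (x 3) ≤ bundleUtil ({0, 2, 4} : Finset (Fin 7)) (x 3) :=
      bundleUtil_mono' (x 3) (by decide) (by decide)
    have : u 3 = bundleUtil (Rlie 3) (x 3) := rfl
    linarith


end BandwidthAlloc
end

section
/- When every agent truthfully reports her desired set, Mechanism 1 returns a maxmin-optimal allocation: the allocation x with x_{ij} = γ*·w_{ij}, where γ* = max{γ ≥ 0 : γ·Σ_i w_{ij} ≤ s_j for all j}, satisfies min_i u_i(x_i) = max over all valid allocations y of min_i u_i(y_i). -/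
open scoped Classical
open Real

namespace BandwidthAlloc

/-- under truthful reports, Mechanism 1 (the allocation
`x_{ij} = γ*·w_{ij}` with `γ* = max {γ ≥ 0 : γ·Σ_i w_{ij} ≤ s_j ∀ j}`) returns a
maxmin-optimal allocation: it is valid and
`min_i u_i(x_i) = max_{valid y} min_i u_i(y_i)`. -/
theorem mech1_truthful_optimal {n m : ℕ} (s : Fin m → ℝ) (hs : ∀ j, 0 < s j)
    (R : Fin n → Finset (Fin m)) (hR : ∀ i, (R i).Nonempty) :
    maxminOptimal s R (mech1 s R) := by
  classical
  have hw0 : ∀ i j, 0 ≤ w R i j := by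
    intro i j; unfold w; split <;> norm_num
  rcases Nat.eq_zero_or_pos n with hn | hn
  · subst hn
    refine ⟨⟨fun i => i.elim0, fun j => ?_⟩, fun y hy => ?_⟩
    · simp [(hs j).le]
    · simp [minUtil, Set.range_eq_empty]
  · have hne : Nonempty (Fin n) := Fin.pos_iff_nonempty.mp hn
    obtain ⟨i0⟩ := hne
    set S : Set ℝ := {γ : ℝ | 0 ≤ γ ∧ ∀ j, γ * ∑ i, w R i j ≤ s j} with hSdef
    have hγdef : gammaStar s R = sSup S := rfl
    have h0S : (0 : ℝ) ∈ S := ⟨le_refl 0, fun j => by simpa using (hs j).le⟩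
    obtain ⟨j0, hj0⟩ := hR i0
    have hcge : ∀ j (i : Fin n), j ∈ R i → (1 : ℝ) ≤ ∑ k, w R k j := by
      intro j i hj
      have h := Finset.single_le_sum (f := fun k => w R k j)
        (fun k _ => hw0 k j) (Finset.mem_univ i)
      have hw1 : w R i j = 1 := by simp [w, hj]
      linarith
    have hbdd : BddAbove S := by
      refine ⟨s j0, fun γ hγ => ?_⟩
      have h1 := hcge j0 i0 hj0
      have := hγ.2 j0
      nlinarith [hγ.1]
    have hγ0 : 0 ≤ gammaStar s R := by
      rw [hγdef]; exact le_csSup hbdd h0S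
    have hγS : ∀ j, gammaStar s R * ∑ i, w R i j ≤ s j := by
      intro j
      have hc0 : 0 ≤ ∑ i, w R i j := Finset.sum_nonneg fun i _ => hw0 i j
      rcases hc0.eq_or_lt with h | h
      · rw [← h, mul_zero]; exact (hs j).le
      · have hle : gammaStar s R ≤ s j / ∑ i, w R i j := by
          rw [hγdef]
          exact csSup_le ⟨0, h0S⟩ fun γ hγ => (le_div_iff₀ h).2 (hγ.2 j)
        calc gammaStar s R * ∑ i, w R i j ≤ (s j / ∑ i, w R i j) * ∑ i, w R i j :=
              mul_le_mul_of_nonneg_right hle hc0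
          _ = s j := div_mul_cancel₀ _ h.ne'
    have hvalid : validAlloc s (mech1 s R) := by
      refine ⟨fun i j => mul_nonneg hγ0 (hw0 i j), fun j => ?_⟩
      unfold mech1
      rw [← Finset.mul_sum]
      exact hγS j
    have hutil : ∀ i, util R (mech1 s R) i = gammaStar s R := by
      intro i
      unfold util bundleUtil
      have himg : (mech1 s R i) '' ((R i : Set (Fin m))) = {gammaStar s R} := by
        apply Set.Subset.antisymm
        · rintro t ⟨j, hj, rfl⟩
          have hj' : j ∈ R i := hj
          simp [mech1, w, hj']
        · obtain ⟨j1, hj1⟩ := hR i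
          rintro t rfl
          exact ⟨j1, hj1, by simp [mech1, w, hj1]⟩
      rw [himg, csInf_singleton]
    have hmin : minUtil R (mech1 s R) = gammaStar s R := by
      unfold minUtil
      have heq : (fun i => util R (mech1 s R) i) = fun _ => gammaStar s R := funext hutil
      haveI : Nonempty (Fin n) := ⟨i0⟩
      rw [heq, Set.range_const, csInf_singleton]
    refine ⟨hvalid, fun y hy => ?_⟩
    rw [hmin]
    have hbb : ∀ i, BddBelow (y i '' ((R i : Set (Fin m)))) :=
      fun i => ((R i).finite_toSet.image _).bddBelow
    have h1 : ∀ i, minUtil R y ≤ util R y i := fun i =>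
      csInf_le (Set.finite_range _).bddBelow ⟨i, rfl⟩
    have h2 : ∀ i j, j ∈ R i → util R y i ≤ y i j := fun i j hj =>
      csInf_le (hbb i) ⟨j, hj, rfl⟩
    rcases le_or_gt (minUtil R y) 0 with ht | ht
    · exact ht.trans hγ0
    · rw [hγdef]
      refine le_csSup hbdd ⟨ht.le, fun j => ?_⟩
      calc minUtil R y * ∑ i, w R i j = ∑ i, minUtil R y * w R i j := Finset.mul_sum ..
        _ ≤ ∑ i, y i j := by
            refine Finset.sum_le_sum fun i _ => ?_
            by_cases hj : j ∈ R i
            · have := (h1 i).trans (h2 i j hj)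
              simp [w, hj, this]
            · simp [w, hj, hy.1 i j]
        _ ≤ s j := hy.2 j

end BandwidthAlloc
end

section
/- Mechanism 1 DSE-implements maxmin welfare: truth-telling is a dominant strategy equilibrium, and in every dominant strategy equilibrium (a profile of reports in which each agent's report is a dominant strategy with respect to her true desired set), the resulting allocation is maxmin-optimal with respect to the true utilities; moreover, every agent's true utility in any dominant strategy equilibrium equals her true utility in the truthful outcome. -/
open scoped Classical
open Real

namespace BandwidthAlloc

/-- A (nonempty) report `Ri'` is a dominant strategy in Mechanism 1 for agent `i` with
true desired set `Rt i`: against every profile of (nonempty) reports of the others, it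
yields true utility at least that of any alternative (nonempty) report. -/
def dominantForMech1 {n m : ℕ} (s : Fin m → ℝ) (Rt : Fin n → Finset (Fin m))
    (i : Fin n) (Ri' : Finset (Fin m)) : Prop :=
  Ri'.Nonempty ∧
    ∀ Rr : Fin n → Finset (Fin m), (∀ k, (Rr k).Nonempty) →
      ∀ Ri'' : Finset (Fin m), Ri''.Nonempty →
        bundleUtil (Rt i) (mech1 s (Function.update Rr i Ri'') i) ≤
          bundleUtil (Rt i) (mech1 s (Function.update Rr i Ri') i)


section AuxLemmas

variable {n m : ℕ}

lemma w_nonneg (R : Fin n → Finset (Fin m)) (i : Fin n) (j : Fin m) : 0 ≤ w R i j := by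
  unfold w; split <;> norm_num

lemma w_le_one (R : Fin n → Finset (Fin m)) (i : Fin n) (j : Fin m) : w R i j ≤ 1 := by
  unfold w; split <;> norm_num

lemma sum_w_nonneg (R : Fin n → Finset (Fin m)) (j : Fin m) : 0 ≤ ∑ i, w R i j :=
  Finset.sum_nonneg fun i _ => w_nonneg R i j

lemma one_le_sum_w {R : Fin n → Finset (Fin m)} {i0 : Fin n} {j : Fin m} (h : j ∈ R i0) :
    (1 : ℝ) ≤ ∑ i, w R i j := by
  have : w R i0 j = 1 := if_pos h
  calc (1:ℝ) = w R i0 j := this.symm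
    _ ≤ ∑ i, w R i j :=
      Finset.single_le_sum (fun i _ => w_nonneg R i j) (Finset.mem_univ i0)

/-- The feasibility set of Mechanism 1. -/
def Sset (s : Fin m → ℝ) (R : Fin n → Finset (Fin m)) : Set ℝ :=
  {γ : ℝ | 0 ≤ γ ∧ ∀ j, γ * ∑ i, w R i j ≤ s j}

lemma gammaStar_def (s : Fin m → ℝ) (R : Fin n → Finset (Fin m)) :
    gammaStar s R = sSup (Sset s R) := rfl

lemma zero_mem_Sset {s : Fin m → ℝ} (hs : ∀ j, 0 < s j) (R : Fin n → Finset (Fin m)) :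
    (0 : ℝ) ∈ Sset s R :=
  ⟨le_refl 0, fun j => by simpa using (hs j).le⟩

lemma bddAbove_Sset {s : Fin m → ℝ} (R : Fin n → Finset (Fin m))
    {i0 : Fin n} {j0 : Fin m} (hj : j0 ∈ R i0) : BddAbove (Sset s R) := by
  refine ⟨s j0, fun γ hγ => ?_⟩
  have h1 : γ ≤ γ * ∑ i, w R i j0 := le_mul_of_one_le_right hγ.1 (one_le_sum_w hj)
  exact h1.trans (hγ.2 j0)

lemma gammaStar_mem {s : Fin m → ℝ} (hs : ∀ j, 0 < s j) (R : Fin n → Finset (Fin m))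
    {i0 : Fin n} {j0 : Fin m} (hj : j0 ∈ R i0) : gammaStar s R ∈ Sset s R := by
  have hbdd := bddAbove_Sset (s := s) R hj
  have hne : (Sset s R).Nonempty := ⟨0, zero_mem_Sset hs R⟩
  constructor
  · exact le_csSup hbdd (zero_mem_Sset hs R)
  · intro j
    rcases eq_or_lt_of_le (sum_w_nonneg R j) with h0 | hpos
    · rw [gammaStar_def, ← h0, mul_zero]; exact (hs j).le
    · have hub : gammaStar s R ≤ s j / ∑ i, w R i j := by
        rw [gammaStar_def]
        exact csSup_le hne fun γ hγ => (le_div_iff₀ hpos).mpr (hγ.2 j)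
      calc gammaStar s R * ∑ i, w R i j
          ≤ (s j / ∑ i, w R i j) * ∑ i, w R i j :=
            mul_le_mul_of_nonneg_right hub (sum_w_nonneg R j)
        _ = s j := div_mul_cancel₀ _ (ne_of_gt hpos)

lemma le_gammaStar {s : Fin m → ℝ} {R : Fin n → Finset (Fin m)} {γ : ℝ}
    (hγ : γ ∈ Sset s R) {i0 : Fin n} {j0 : Fin m} (hj : j0 ∈ R i0) :
    γ ≤ gammaStar s R :=
  le_csSup (bddAbove_Sset R hj) hγ

lemma gammaStar_nonneg {s : Fin m → ℝ} (hs : ∀ j, 0 < s j) (R : Fin n → Finset (Fin m))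
    {i0 : Fin n} {j0 : Fin m} (hj : j0 ∈ R i0) : 0 ≤ gammaStar s R :=
  (gammaStar_mem hs R hj).1

lemma gammaStar_pos {s : Fin m → ℝ} (hs : ∀ j, 0 < s j) (R : Fin n → Finset (Fin m))
    {i0 : Fin n} {j0 : Fin m} (hj : j0 ∈ R i0) : 0 < gammaStar s R := by
  have hm : (Finset.univ : Finset (Fin m)).Nonempty := ⟨j0, Finset.mem_univ j0⟩
  set smin : ℝ := Finset.univ.inf' hm s with hsmin
  have hsminpos : 0 < smin := (Finset.lt_inf'_iff hm).mpr fun j _ => hs j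
  have hsmin_le : ∀ j, smin ≤ s j := fun j => Finset.inf'_le s (Finset.mem_univ j)
  have hnpos : (0:ℝ) < n := by
    have : 0 < n := Fin.pos i0
    exact_mod_cast this
  have hmem : smin / n ∈ Sset s R := by
    refine ⟨le_of_lt (div_pos hsminpos hnpos), fun j => ?_⟩
    have hsum : ∑ i, w R i j ≤ (n:ℝ) := by
      calc ∑ i, w R i j ≤ ∑ _i : Fin n, (1:ℝ) :=
            Finset.sum_le_sum fun i _ => w_le_one R i j
        _ = n := by simp
    calc smin / n * ∑ i, w R i j ≤ smin / n * n :=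
          mul_le_mul_of_nonneg_left hsum (le_of_lt (div_pos hsminpos hnpos))
      _ = smin := div_mul_cancel₀ _ (ne_of_gt hnpos)
      _ ≤ s j := hsmin_le j
  exact lt_of_lt_of_le (div_pos hsminpos hnpos) (le_gammaStar hmem hj)

lemma gammaStar_mono {s : Fin m → ℝ} (hs : ∀ j, 0 < s j)
    {R R' : Fin n → Finset (Fin m)} (hsub : ∀ i, R i ⊆ R' i)
    {i0 : Fin n} {j0 : Fin m} (hj : j0 ∈ R i0) :
    gammaStar s R' ≤ gammaStar s R := by
  rw [gammaStar_def, gammaStar_def]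
  refine csSup_le_csSup (bddAbove_Sset R hj) ⟨0, zero_mem_Sset hs R'⟩ ?_
  rintro γ ⟨hγ0, hγ⟩
  refine ⟨hγ0, fun j => ?_⟩
  have hw : ∀ i, w R i j ≤ w R' i j := by
    intro i
    unfold w
    by_cases h : j ∈ R i
    · rw [if_pos h, if_pos (hsub i h)]
    · rw [if_neg h]; exact w_nonneg R' i j
  calc γ * ∑ i, w R i j ≤ γ * ∑ i, w R' i j :=
        mul_le_mul_of_nonneg_left (Finset.sum_le_sum fun i _ => hw i) hγ0
    _ ≤ s j := hγ j

lemma bundleUtil_mech1_of_subset {s : Fin m → ℝ} {R : Fin n → Finset (Fin m)}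
    {i : Fin n} {T : Finset (Fin m)} (hT : T.Nonempty) (hsub : T ⊆ R i) :
    bundleUtil T (mech1 s R i) = gammaStar s R := by
  have himg : mech1 s R i '' (T : Set (Fin m)) = {gammaStar s R} := by
    apply Set.eq_singleton_iff_nonempty_unique_mem.mpr
    constructor
    · obtain ⟨j, hjT⟩ := hT
      refine ⟨gammaStar s R, ⟨j, by exact_mod_cast hjT, ?_⟩⟩
      simp [mech1, w, hsub hjT]
    · rintro x ⟨j, hjT, rfl⟩
      have hjR : j ∈ R i := hsub (by exact_mod_cast hjT)
      simp [mech1, w, hjR]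
  rw [bundleUtil, himg, csInf_singleton]

lemma bundleUtil_mech1_of_not_subset {s : Fin m → ℝ} {R : Fin n → Finset (Fin m)}
    {i : Fin n} {T : Finset (Fin m)} (hnsub : ¬ T ⊆ R i) (hγ : 0 ≤ gammaStar s R) :
    bundleUtil T (mech1 s R i) = 0 := by
  obtain ⟨j0, hj0T, hj0R⟩ := Finset.not_subset.mp hnsub
  have h0mem : (0:ℝ) ∈ mech1 s R i '' (T : Set (Fin m)) := by
    refine ⟨j0, by exact_mod_cast hj0T, ?_⟩
    simp [mech1, w, hj0R]
  have hlb : ∀ x ∈ mech1 s R i '' (T : Set (Fin m)), (0:ℝ) ≤ x := by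
    rintro x ⟨j, _, rfl⟩
    exact mul_nonneg hγ (w_nonneg R i j)
  rw [bundleUtil]
  exact le_antisymm (csInf_le ⟨0, hlb⟩ h0mem) (le_csInf ⟨0, h0mem⟩ hlb)

end AuxLemmas

/-- Mechanism 1 DSE-implements maxmin welfare: truth-telling is a
dominant strategy equilibrium, every dominant strategy equilibrium yields a
maxmin-optimal allocation w.r.t. the true utilities, and in every dominant strategy
equilibrium each agent's true utility equals her true utility in the truthful outcome. -/
theorem mech1_dse_implements {n m : ℕ} (s : Fin m → ℝ) (hs : ∀ j, 0 < s j)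
    (Rt : Fin n → Finset (Fin m)) (hRt : ∀ i, (Rt i).Nonempty) :
    (∀ i, dominantForMech1 s Rt i (Rt i)) ∧
      ∀ Rr : Fin n → Finset (Fin m), (∀ i, (Rr i).Nonempty) →
        (∀ i, dominantForMech1 s Rt i (Rr i)) →
        maxminOptimal s Rt (mech1 s Rr) ∧
          ∀ i, bundleUtil (Rt i) (mech1 s Rr i) =
            bundleUtil (Rt i) (mech1 s Rt i) := by
  constructor
  · -- truth-telling is dominant
    intro i
    refine ⟨hRt i, ?_⟩
    intro Rr hRr Ri'' hRi''
    obtain ⟨j0, hj0⟩ := hRt i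
    have hj1 : j0 ∈ (Function.update Rr i (Rt i)) i := by
      rw [Function.update_self]; exact hj0
    have hRHS : bundleUtil (Rt i) (mech1 s (Function.update Rr i (Rt i)) i) =
        gammaStar s (Function.update Rr i (Rt i)) :=
      bundleUtil_mech1_of_subset (hRt i) (by rw [Function.update_self])
    by_cases hsub : Rt i ⊆ Ri''
    · have hLHS : bundleUtil (Rt i) (mech1 s (Function.update Rr i Ri'') i) =
          gammaStar s (Function.update Rr i Ri'') :=
        bundleUtil_mech1_of_subset (hRt i) (by rw [Function.update_self]; exact hsub)
      rw [hLHS, hRHS]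
      refine gammaStar_mono hs ?_ hj1
      intro k
      rcases eq_or_ne k i with rfl | hk
      · rw [Function.update_self, Function.update_self]; exact hsub
      · rw [Function.update_of_ne hk, Function.update_of_ne hk]
    · obtain ⟨j2, hj2⟩ := hRi''
      have hj2' : j2 ∈ (Function.update Rr i Ri'') i := by
        rw [Function.update_self]; exact hj2
      rw [bundleUtil_mech1_of_not_subset
        (by rw [Function.update_self]; exact hsub) (gammaStar_nonneg hs _ hj2'), hRHS]
      exact gammaStar_nonneg hs _ hj1
  · intro Rr hRr hdom
    rcases Nat.eq_zero_or_pos n with hn | hn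
    · -- degenerate case n = 0
      subst hn
      have hminz : ∀ x : Fin 0 → Fin m → ℝ, minUtil Rt x = 0 := by
        intro x
        rw [minUtil, Set.range_eq_empty, Real.sInf_empty]
      refine ⟨⟨⟨fun i => i.elim0, fun j => ?_⟩, fun y _ => by rw [hminz, hminz]⟩,
        fun i => i.elim0⟩
      simp [(hs j).le]
    · haveI : Nonempty (Fin n) := ⟨⟨0, hn⟩⟩
      set i0 : Fin n := ⟨0, hn⟩ with hi0
      obtain ⟨jt, hjt⟩ := hRt i0
      obtain ⟨jr, hjr⟩ := hRr i0
      -- every dominant report is a superset of the truth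
      have hsubRt : ∀ i, Rt i ⊆ Rr i := by
        intro i
        by_contra hnsub
        obtain ⟨ja, hja⟩ := hRt i
        obtain ⟨jb, hjb⟩ := hRr i
        have hd := (hdom i).2 Rt hRt (Rt i) (hRt i)
        have hjb' : jb ∈ (Function.update Rt i (Rr i)) i := by
          rw [Function.update_self]; exact hjb
        have hRHS0 : bundleUtil (Rt i) (mech1 s (Function.update Rt i (Rr i)) i) = 0 :=
          bundleUtil_mech1_of_not_subset
            (by rw [Function.update_self]; exact hnsub) (gammaStar_nonneg hs _ hjb')
        rw [Function.update_eq_self, hRHS0,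
          bundleUtil_mech1_of_subset (hRt i) (subset_refl _)] at hd
        exact absurd hd (not_le.mpr (gammaStar_pos hs Rt hja))
      -- hybrid argument: gammaStar is unchanged along the DSE
      have hγeq : gammaStar s Rr = gammaStar s Rt := by
        have key : ∀ k, k ≤ n →
            gammaStar s (fun i => if (i : ℕ) < k then Rr i else Rt i) = gammaStar s Rt := by
          intro k
          induction k with
          | zero =>
            intro _
            have h0 : (fun i : Fin n => if (i : ℕ) < 0 then Rr i else Rt i) = Rt := by
              funext i
              simp
            rw [h0]
          | succ k ih =>
            intro hk
            have hkn : k < n := hk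
            set ik : Fin n := ⟨k, hkn⟩ with hik
            set Hk : Fin n → Finset (Fin m) := fun i => if (i : ℕ) < k then Rr i else Rt i
              with hHkdef
            have hHkne : ∀ i, (Hk i).Nonempty := by
              intro i
              dsimp only [Hk]
              split
              · exact hRr i
              · exact hRt i
            have hHkik : Hk ik = Rt ik := by
              dsimp only [Hk]
              rw [if_neg (by simp [ik])]
            have hstep : (fun i : Fin n => if (i : ℕ) < k + 1 then Rr i else Rt i)
                = Function.update Hk ik (Rr ik) := by
              funext i
              rcases eq_or_ne i ik with rfl | hne
              · rw [Function.update_self, if_pos (by simp [ik])]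
              · have hv : (i : ℕ) ≠ k := fun h => hne (Fin.ext h)
                have hiff : ((i : ℕ) < k + 1) ↔ ((i : ℕ) < k) := by omega
                rw [Function.update_of_ne hne]
                dsimp only [Hk]
                rw [if_congr hiff rfl rfl]
            obtain ⟨jk, hjk⟩ := hHkne i0
            have hle1 : gammaStar s (Function.update Hk ik (Rr ik)) ≤ gammaStar s Hk := by
              refine gammaStar_mono hs ?_ hjk
              intro i
              rcases eq_or_ne i ik with rfl | hne
              · rw [Function.update_self, hHkik]; exact hsubRt ik
              · rw [Function.update_of_ne hne]
            have hge1 : gammaStar s Hk ≤ gammaStar s (Function.update Hk ik (Rr ik)) := by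
              have hd := (hdom ik).2 Hk hHkne (Rt ik) (hRt ik)
              have heq2 : Function.update Hk ik (Rt ik) = Hk := by
                rw [← hHkik]
                exact Function.update_eq_self ik Hk
              rw [heq2, bundleUtil_mech1_of_subset (hRt ik) (by rw [hHkik]),
                bundleUtil_mech1_of_subset (hRt ik)
                  (by rw [Function.update_self]; exact hsubRt ik)] at hd
              exact hd
            rw [hstep, le_antisymm hle1 hge1]
            exact ih (le_of_lt hkn)
        have hfin : (fun i : Fin n => if (i : ℕ) < n then Rr i else Rt i) = Rr := by
          funext i
          rw [if_pos i.isLt]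
        have := key n (le_refl n)
        rwa [hfin] at this
      have hutil : ∀ i, bundleUtil (Rt i) (mech1 s Rr i) = gammaStar s Rt := by
        intro i
        rw [bundleUtil_mech1_of_subset (hRt i) (hsubRt i), hγeq]
      have hutilRt : ∀ i, bundleUtil (Rt i) (mech1 s Rt i) = gammaStar s Rt :=
        fun i => bundleUtil_mech1_of_subset (hRt i) (subset_refl _)
      refine ⟨⟨⟨?_, ?_⟩, ?_⟩, fun i => by rw [hutil i, hutilRt i]⟩
      · intro i j
        exact mul_nonneg (gammaStar_nonneg hs Rr hjr) (w_nonneg Rr i j)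
      · intro j
        have hmem := (gammaStar_mem hs Rr hjr).2 j
        calc ∑ i, mech1 s Rr i j = gammaStar s Rr * ∑ i, w Rr i j := by
              rw [Finset.mul_sum]
              rfl
          _ ≤ s j := hmem
      · intro y hy
        obtain ⟨hy0, hysum⟩ := hy
        have hmin1 : minUtil Rt (mech1 s Rr) = gammaStar s Rt := by
          rw [minUtil]
          have hrng : (Set.range fun i => util Rt (mech1 s Rr) i) = {gammaStar s Rt} := by
            apply Set.eq_singleton_iff_nonempty_unique_mem.mpr
            constructor
            · exact ⟨util Rt (mech1 s Rr) i0, i0, rfl⟩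
            · rintro x ⟨i, rfl⟩
              exact hutil i
          rw [hrng, csInf_singleton]
        have huge0 : ∀ i, 0 ≤ util Rt y i := by
          intro i
          apply le_csInf ((Finset.coe_nonempty.mpr (hRt i)).image _)
          rintro b ⟨j, _, rfl⟩
          exact hy0 i j
        have ht0 : 0 ≤ minUtil Rt y := by
          apply le_csInf (Set.range_nonempty _)
          rintro b ⟨i, rfl⟩
          exact huge0 i
        have htle : ∀ i, minUtil Rt y ≤ util Rt y i := by
          intro i
          exact csInf_le ⟨0, by rintro b ⟨i', rfl⟩; exact huge0 i'⟩ ⟨i, rfl⟩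
        have hui_le : ∀ i, ∀ j ∈ Rt i, util Rt y i ≤ y i j := by
          intro i j hj
          exact csInf_le ⟨0, by rintro b ⟨j', _, rfl⟩; exact hy0 i j'⟩
            ⟨j, by exact_mod_cast hj, rfl⟩
        have hmemS : minUtil Rt y ∈ Sset s Rt := by
          refine ⟨ht0, fun j => ?_⟩
          have hpt : ∀ i, minUtil Rt y * w Rt i j ≤ y i j := by
            intro i
            by_cases h : j ∈ Rt i
            · rw [w, if_pos h, mul_one]
              exact (htle i).trans (hui_le i j h)
            · rw [w, if_neg h, mul_zero]
              exact hy0 i j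
          calc minUtil Rt y * ∑ i, w Rt i j = ∑ i, minUtil Rt y * w Rt i j :=
                Finset.mul_sum _ _ _
            _ ≤ ∑ i, y i j := Finset.sum_le_sum fun i _ => hpt i
            _ ≤ s j := hysum j
        rw [hmin1]
        exact le_gammaStar hmemS hjt


end BandwidthAlloc
end

section
/- Mechanism 1 does not Nash-implement maxmin welfare: in the instance with n agents and n goods each of supply 1, where agent i's true desired set is R̃_i = {i}, the report profile in which every agent reports the full set M = {1,…,n} is a Nash equilibrium of Mechanism 1 (no agent can strictly increase her true utility by unilaterally changing her report), and its outcome gives every agent true utility 1/n, whereas the maxmin-optimal value is 1. -/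
open scoped Classical
open Real

namespace BandwidthAlloc

lemma bundleUtil_singleton {m : ℕ} (i : Fin m) (xi : Fin m → ℝ) :
    bundleUtil {i} xi = xi i := by
  simp [bundleUtil]

lemma gammaStar_eq (n : ℕ) (hn : 0 < n) (R : Fin n → Finset (Fin n))
    (hex : ∃ j0 : Fin n, ∀ i, j0 ∈ R i) :
    gammaStar (fun _ => (1 : ℝ)) R = 1 / n := by
  have hnR : (0 : ℝ) < n := Nat.cast_pos.mpr hn
  have hsum_le : ∀ j, ∑ i, w R i j ≤ (n : ℝ) := by
    intro j
    calc ∑ i, w R i j ≤ ∑ _i : Fin n, (1 : ℝ) := by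
          apply Finset.sum_le_sum
          intro i _
          unfold w; split <;> norm_num
      _ = n := by simp
  obtain ⟨j0, hj0⟩ := hex
  have hsum_j0 : ∑ i, w R i j0 = (n : ℝ) := by
    have : ∀ i : Fin n, w R i j0 = 1 := fun i => by simp [w, hj0 i]
    simp [this]
  have hset : {γ : ℝ | 0 ≤ γ ∧ ∀ j, γ * ∑ i, w R i j ≤ (fun _ => (1:ℝ)) j}
      = Set.Icc 0 (1 / (n:ℝ)) := by
    ext γ
    simp only [Set.mem_setOf_eq, Set.mem_Icc]
    constructor
    · rintro ⟨hγ, h⟩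
      refine ⟨hγ, ?_⟩
      have := h j0
      rw [hsum_j0] at this
      rw [le_div_iff₀ hnR]; linarith
    · rintro ⟨hγ, hγn⟩
      refine ⟨hγ, fun j => ?_⟩
      calc γ * ∑ i, w R i j ≤ γ * n := by
            exact mul_le_mul_of_nonneg_left (hsum_le j) hγ
        _ ≤ (1 / n) * n := mul_le_mul_of_nonneg_right hγn (le_of_lt hnR)
        _ = 1 := by field_simp
  unfold gammaStar
  rw [hset, csSup_Icc (by positivity)]

/-- Mechanism 1 does not Nash-implement maxmin welfare: with `n` agents,
`n` goods of supply 1 and true sets `R̃_i = {i}`, all agents reporting the full set `M`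
is a Nash equilibrium whose outcome gives every agent true utility `1/n`, while the
maxmin-optimal value is `1`. -/
theorem mech1_not_nash_implementation (n : ℕ) (hn : 0 < n) :
    let s : Fin n → ℝ := fun _ => 1
    let Rt : Fin n → Finset (Fin n) := fun i => {i}
    let Rr : Fin n → Finset (Fin n) := fun _ => Finset.univ
    (∀ (i : Fin n) (Ri' : Finset (Fin n)), Ri'.Nonempty →
        bundleUtil (Rt i) (mech1 s (Function.update Rr i Ri') i) ≤
          bundleUtil (Rt i) (mech1 s Rr i)) ∧
      (∀ i, bundleUtil (Rt i) (mech1 s Rr i) = 1 / (n : ℝ)) ∧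
      IsGreatest {v : ℝ | ∃ y, validAlloc s y ∧ v = minUtil Rt y} 1 := by
  intro s Rt Rr
  have hnR : (0 : ℝ) < n := Nat.cast_pos.mpr hn
  have hγr : gammaStar s Rr = 1 / n := by
    apply gammaStar_eq n hn
    exact ⟨⟨0, hn⟩, fun i => Finset.mem_univ _⟩
  have hutil : ∀ i, bundleUtil (Rt i) (mech1 s Rr i) = 1 / (n : ℝ) := by
    intro i
    rw [show Rt i = {i} from rfl, bundleUtil_singleton]
    simp [mech1, hγr, w, Rr]
  refine ⟨?_, hutil, ?_, ?_⟩
  · -- Nash equilibrium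
    intro i Ri' hne
    obtain ⟨j0, hj0⟩ := hne
    have hγ' : gammaStar s (Function.update Rr i Ri') = 1 / n := by
      apply gammaStar_eq n hn
      refine ⟨j0, fun k => ?_⟩
      by_cases hk : k = i
      · subst hk; simp [Function.update_self, hj0]
      · simp [Function.update_of_ne hk, Rr]
    rw [hutil i, show Rt i = {i} from rfl, bundleUtil_singleton]
    simp only [mech1, hγ', w, Function.update_self]
    split
    · norm_num
    · rw [mul_zero]; positivity
  · -- membership: allocation y i j = indicator (i = j)
    refine ⟨fun i j => if i = j then 1 else 0, ⟨⟨fun i j => ?_, fun j => ?_⟩, ?_⟩⟩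
    · dsimp only; split <;> norm_num
    · simp [Finset.sum_ite_eq', s]
    · have : ∀ i : Fin n, util Rt (fun i j => if i = j then (1:ℝ) else 0) i = 1 := by
        intro i
        rw [show util Rt (fun i j => if i = j then (1:ℝ) else 0) i
            = bundleUtil {i} (fun j => if i = j then (1:ℝ) else 0) from rfl,
          bundleUtil_singleton]
        simp
      unfold minUtil
      rw [show (Set.range fun i => util Rt (fun i j => if i = j then (1:ℝ) else 0) i)
          = {1} from ?_]
      · exact (csInf_singleton 1).symm
      · ext v
        simp only [Set.mem_range, Set.mem_singleton_iff]
        constructor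
        · rintro ⟨i, rfl⟩; exact this i
        · rintro rfl; exact ⟨⟨0, hn⟩, this _⟩
  · -- upper bound
    rintro v ⟨y, ⟨hynn, hys⟩, rfl⟩
    set i0 : Fin n := ⟨0, hn⟩
    have hbdd : BddBelow (Set.range fun i => util Rt y i) :=
      (Set.finite_range _).bddBelow
    have h1 : minUtil Rt y ≤ util Rt y i0 := csInf_le hbdd ⟨i0, rfl⟩
    have h2 : util Rt y i0 = y i0 i0 := bundleUtil_singleton i0 (y i0)
    have h3 : y i0 i0 ≤ ∑ i, y i i0 :=
      Finset.single_le_sum (fun i _ => hynn i i0) (Finset.mem_univ i0)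
    have h4 := hys i0
    simp only [s] at h4
    linarith

end BandwidthAlloc
end

section
/- For every ρ ∈ (-∞, 1] the social choice rule Ψ_ρ does not satisfy no veto power: in the instance with n ≥ 2 agents and n goods each of supply 1, where R_i = {i} for every agent i, the allocation x with x_{ii} = 1 for i ∈ {1,…,n−1}, x_{nn} = 0, and x_{ij} = 0 otherwise satisfies u_i(x_i) ≥ u_i(y_i) for every valid allocation y and every agent i ≤ n−1, yet x ∉ Ψ_ρ(u); indeed the unique element of Ψ_ρ(u) has x_{ii} = 1 for all i. -/
open scoped Classical
open Real

namespace BandwidthAlloc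

lemma bundleUtil_single {m : ℕ} (j : Fin m) (xi : Fin m → ℝ) :
    bundleUtil {j} xi = xi j := by
  simp [bundleUtil]

lemma ces_one_eval (ρ : ℝ) (n : ℕ) :
    ces ρ (fun _ : Fin n => (1:ℝ)) = if ρ = 0 then 1 else (n:ℝ) ^ (1/ρ) := by
  unfold ces
  split_ifs with h h2
  · simp
  · exact absurd h2.2.choose_spec one_ne_zero
  · simp [Real.one_rpow]

lemma sum_ones_eq (n : ℕ) : (∑ _j : Fin n, (1:ℝ)) = n := by simp

lemma ces_le_ces_one (ρ : ℝ) {n : ℕ} (v : Fin n → ℝ)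
    (h0 : ∀ i, 0 ≤ v i) (h1 : ∀ i, v i ≤ 1) :
    ces ρ v ≤ ces ρ (fun _ : Fin n => (1:ℝ)) := by
  rw [ces_one_eval]
  unfold ces
  split_ifs with h h2
  · exact Finset.prod_le_one (fun i _ => h0 i) (fun i _ => h1 i)
  · positivity
  · rcases lt_trichotomy ρ 0 with hneg | hz | hpos
    · rcases Nat.eq_zero_or_pos n with h' | h'
      · subst h'; simp
      have hpos' : ∀ i, 0 < v i := by
        intro i
        rcases (h0 i).lt_or_eq with h' | h'
        · exact h'
        · exact absurd ⟨hneg, ⟨i, h'.symm⟩⟩ h2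
      have hsum : (n:ℝ) ≤ ∑ i, v i ^ ρ := by
        rw [← sum_ones_eq n]
        exact Finset.sum_le_sum fun i _ =>
          Real.one_le_rpow_of_pos_of_le_one_of_nonpos (hpos' i) (h1 i) hneg.le
      have hn : (0:ℝ) < n := by exact_mod_cast h'
      exact Real.rpow_le_rpow_of_nonpos hn hsum (one_div_nonpos.mpr hneg.le)
    · exact absurd hz h
    · have hsum : ∑ i, v i ^ ρ ≤ (n:ℝ) := by
        rw [← sum_ones_eq n]
        exact Finset.sum_le_sum fun i _ => Real.rpow_le_one (h0 i) (h1 i) hpos.le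
      exact Real.rpow_le_rpow (Finset.sum_nonneg fun i _ =>
        Real.rpow_nonneg (h0 i) ρ) hsum (by positivity)

lemma eq_one_of_ces_one_le (ρ : ℝ) {n : ℕ} (hn : 0 < n) (v : Fin n → ℝ)
    (h0 : ∀ i, 0 ≤ v i) (h1 : ∀ i, v i ≤ 1)
    (hle : ces ρ (fun _ : Fin n => (1:ℝ)) ≤ ces ρ v) : ∀ i, v i = 1 := by
  intro i
  rw [ces_one_eval] at hle
  have hnR : (0:ℝ) < n := by exact_mod_cast hn
  unfold ces at hle
  split_ifs at hle with h h2
  · have hprod : (∏ j, v j) ≤ v i := by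
      rw [← Finset.mul_prod_erase Finset.univ v (Finset.mem_univ i)]
      exact mul_le_of_le_one_right (h0 i)
        (Finset.prod_le_one (fun j _ => h0 j) (fun j _ => h1 j))
    exact le_antisymm (h1 i) (hle.trans hprod)
  · exact absurd hle (not_le.mpr (by positivity))
  · rcases lt_trichotomy ρ 0 with hneg | hz | hpos
    · have hpos' : ∀ j, 0 < v j := by
        intro j
        rcases (h0 j).lt_or_eq with h' | h'
        · exact h'
        · exact absurd ⟨hneg, ⟨j, h'.symm⟩⟩ h2
      have hterm : ∀ j, 1 ≤ v j ^ ρ := fun j =>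
        Real.one_le_rpow_of_pos_of_le_one_of_nonpos (hpos' j) (h1 j) hneg.le
      have hsum : (∑ j, v j ^ ρ) ≤ (n:ℝ) := by
        by_contra hc
        push_neg at hc
        exact absurd hle (not_le.mpr
          (Real.rpow_lt_rpow_of_neg hnR hc (one_div_neg.mpr hneg)))
      have hterm1 : v i ^ ρ = 1 := by
        by_contra hc
        have hlt : 1 < v i ^ ρ := lt_of_le_of_ne (hterm i) (Ne.symm hc)
        have h2' : (∑ _j : Fin n, (1:ℝ)) < ∑ j, v j ^ ρ :=
          Finset.sum_lt_sum (fun j _ => hterm j) ⟨i, Finset.mem_univ i, hlt⟩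
        rw [sum_ones_eq n] at h2'
        exact absurd hsum (not_le.mpr h2')
      by_contra hc
      have hlt : v i < 1 := lt_of_le_of_ne (h1 i) hc
      exact absurd hterm1 (ne_of_gt
        (Real.one_lt_rpow_of_pos_of_lt_one_of_neg (hpos' i) hlt hneg))
    · exact absurd hz h
    · have hterm : ∀ j, v j ^ ρ ≤ 1 := fun j => Real.rpow_le_one (h0 j) (h1 j) hpos.le
      have hsum : (n:ℝ) ≤ ∑ j, v j ^ ρ := by
        by_contra hc
        push_neg at hc
        exact absurd hle (not_le.mpr
          (Real.rpow_lt_rpow (Finset.sum_nonneg fun j _ =>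
            Real.rpow_nonneg (h0 j) ρ) hc (by positivity)))
      have hterm1 : v i ^ ρ = 1 := by
        by_contra hc
        have hlt : v i ^ ρ < 1 := lt_of_le_of_ne (hterm i) hc
        have h2' : (∑ j, v j ^ ρ) < ∑ _j : Fin n, (1:ℝ) :=
          Finset.sum_lt_sum (fun j _ => hterm j) ⟨i, Finset.mem_univ i, hlt⟩
        rw [sum_ones_eq n] at h2'
        exact absurd hsum (not_le.mpr h2')
      by_contra hc
      have hlt : v i < 1 := lt_of_le_of_ne (h1 i) hc
      exact absurd hterm1 (ne_of_lt (Real.rpow_lt_one (h0 i) hlt hpos))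

/-- `Ψ_ρ` violates no veto power for every `ρ ≤ 1`: with `n ≥ 2` agents,
`n` goods of supply 1 and `R_i = {i}`, the allocation giving good `i` fully to agent `i`
for `i < n-1` (and nothing to agent `n`) is a favorite allocation of all agents but the
last, yet it is not in `Ψ_ρ(u)`; the unique element of `Ψ_ρ(u)` is the diagonal
allocation with `x_{ii} = 1` for all `i`. -/
theorem no_veto_power (n : ℕ) (hn : 2 ≤ n) (ρ : ℝ) (hρ : ρ ≤ 1) :
    let s : Fin n → ℝ := fun _ => 1
    let R : Fin n → Finset (Fin n) := fun i => {i}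
    let x : Fin n → Fin n → ℝ := fun i j => if i = j ∧ (i : ℕ) < n - 1 then 1 else 0
    let xd : Fin n → Fin n → ℝ := fun i j => if i = j then 1 else 0
    (∀ i : Fin n, (i : ℕ) < n - 1 →
        ∀ y, validAlloc s y → util R y i ≤ util R x i) ∧
      ¬ maxCES ρ s R x ∧
      maxCES ρ s R xd ∧
      ∀ z, maxCES ρ s R z → z = xd := by
  intro s R x xd
  have hn0 : 0 < n := by omega
  have hutil : ∀ (y : Fin n → Fin n → ℝ) (i : Fin n), util R y i = y i i := by
    intro y i
    show bundleUtil {i} (y i) = y i i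
    exact bundleUtil_single i (y i)
  have hub : ∀ y, validAlloc s y → ∀ i : Fin n, y i i ≤ 1 := by
    intro y hy i
    calc y i i ≤ ∑ k, y k i :=
          Finset.single_le_sum (fun k _ => hy.1 k i) (Finset.mem_univ i)
    _ ≤ 1 := hy.2 i
  have hxval : validAlloc s x := by
    refine ⟨fun i j => by dsimp only [x]; split <;> norm_num, fun j => ?_⟩
    calc ∑ i, x i j ≤ ∑ i, (if i = j then (1:ℝ) else 0) := by
          refine Finset.sum_le_sum fun i _ => ?_
          dsimp only [x]; split_ifs with h1 h2 <;> simp_all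
    _ = 1 := by simp
  have hxdval : validAlloc s xd := by
    refine ⟨fun i j => by dsimp only [xd]; split <;> norm_num, fun j => ?_⟩
    show (∑ i, (if i = j then (1:ℝ) else 0)) ≤ 1
    simp
  have hxd1 : util R xd = fun _ => (1:ℝ) := by
    funext i; rw [hutil]; simp [xd]
  have hi0 : ∃ i0 : Fin n, (i0 : ℕ) = n - 1 := ⟨⟨n - 1, by omega⟩, rfl⟩
  obtain ⟨i0, hi0⟩ := hi0
  refine ⟨?_, ?_, ?_, ?_⟩
  · intro i hi y hy
    rw [hutil, hutil]
    have : x i i = 1 := by simp [x, hi]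
    rw [this]; exact hub y hy i
  · intro hmax
    have hle : ces ρ (fun _ : Fin n => (1:ℝ)) ≤ ces ρ (util R x) := by
      rw [← hxd1]; exact hmax.2 xd hxdval
    have h1 := eq_one_of_ces_one_le ρ hn0 (util R x)
      (fun i => by rw [hutil]; exact hxval.1 i i)
      (fun i => by rw [hutil]; exact hub x hxval i) hle i0
    rw [hutil] at h1
    have : x i0 i0 = 0 := by simp [x]; omega
    rw [this] at h1; norm_num at h1
  · refine ⟨hxdval, fun y hy => ?_⟩
    rw [hxd1]
    exact ces_le_ces_one ρ (util R y)
      (fun i => by rw [hutil]; exact hy.1 i i)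
      (fun i => by rw [hutil]; exact hub y hy i)
  · intro z hz
    have hle : ces ρ (fun _ : Fin n => (1:ℝ)) ≤ ces ρ (util R z) := by
      rw [← hxd1]; exact hz.2 xd hxdval
    have hdiag : ∀ i : Fin n, z i i = 1 := by
      intro i
      have := eq_one_of_ces_one_le ρ hn0 (util R z)
        (fun i => by rw [hutil]; exact hz.1.1 i i)
        (fun i => by rw [hutil]; exact hub z hz.1 i) hle i
      rwa [hutil] at this
    funext i j
    rcases eq_or_ne i j with h | h
    · subst h; simp [xd, hdiag i]
    · have hsum : z j j + z i j ≤ 1 := by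
        calc z j j + z i j = ∑ k ∈ ({j, i} : Finset (Fin n)), z k j := by
              rw [Finset.sum_pair (Ne.symm h)]
        _ ≤ ∑ k, z k j := Finset.sum_le_sum_of_subset_of_nonneg
              (Finset.subset_univ _) (fun k _ _ => hz.1.1 k j)
        _ ≤ 1 := hz.1.2 j
      have : z i j ≤ 0 := by rw [hdiag j] at hsum; linarith
      have hz0 : z i j = 0 := le_antisymm this (hz.1.1 i j)
      simp [xd, h, hz0]


end BandwidthAlloc
end
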